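/- For N = 2, let m₀ ∈ L^∞(𝕋) satisfy |m₀(z)|² + |m₀(-z)|² = 2 for a.e. z ∈ 𝕋, and set m₁(z) := z · conj(m₀(-z)). Define operators on L²(𝕋) by (S_j f)(z) = m_j(z) f(z²), j = 0,1. Then S₀ and S₁ satisfy the Cuntz O₂ relations: S_i* S_j = δ_{ij} I and S₀S₀* + S₁S₁* = I. -/

import Mathlib

open MeasureTheory Filter Set
open scoped Real ENNReal

/-- The Ruelle transfer operator of order `N` with filter `m₀`, on complex
functions on the circle (encoded as `1`-periodic functions on `ℝ`):
`(Rf)(x) = (1/N) ∑_{k<N} |m₀((x+k)/N)|² f((x+k)/N)`. -/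
noncomputable def ruelle (N : ℕ) (m₀ : ℝ → ℂ) (f : ℝ → ℂ) : ℝ → ℂ :=
  fun x => (N : ℂ)⁻¹ *
    ∑ k ∈ Finset.range N, (‖m₀ ((x + k) / N)‖ : ℂ) ^ 2 * f ((x + k) / N)

/-- The Ruelle transfer operator acting on real-valued functions. -/
noncomputable def ruelleR (N : ℕ) (m₀ : ℝ → ℂ) (h : ℝ → ℝ) : ℝ → ℝ :=
  fun x => (N : ℝ)⁻¹ *
    ∑ k ∈ Finset.range N, ‖m₀ ((x + k) / N)‖ ^ 2 * h ((x + k) / N)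

/-- The high-pass filter `m₁(z) = z · conj(m₀(-z))` (additively, `-z` is
translation by `1/2` and `z` is `e^{2πix}`). -/
noncomputable def m1of (m₀ : ℝ → ℂ) : ℝ → ℂ :=
  fun x => Complex.exp (2 * (Real.pi : ℂ) * Complex.I * (x : ℂ))
    * (starRingEnd ℂ) (m₀ (x + 1/2))

/-- The adjoint `S*` of `(Sf)(z) = m(z)f(z²)`:
`(S*f)(z) = (1/2)∑_{w²=z} conj(m(w)) f(w)`. -/
noncomputable def adj2 (m f : ℝ → ℂ) : ℝ → ℂ :=
  fun x => (2 : ℂ)⁻¹ *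
    ∑ k ∈ Finset.range 2, (starRingEnd ℂ) (m ((x + k) / 2)) * f ((x + k) / 2)

namespace Stmt9Aux

open intervalIntegral

lemma qmp_half : Measure.QuasiMeasurePreserving (fun x : ℝ => x / 2) volume volume := by
  have h : (fun x : ℝ => x / 2) = (fun x : ℝ => (2:ℝ)⁻¹ * x) := funext fun x => by ring
  rw [h]
  refine ⟨measurable_const_mul _, ?_⟩
  rw [Real.map_volume_mul_left (by norm_num : ((2:ℝ)⁻¹) ≠ 0)]
  exact Measure.smul_absolutelyContinuous

lemma qmp_add (c : ℝ) : Measure.QuasiMeasurePreserving (fun x : ℝ => x + c) volume volume :=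
  (measurePreserving_add_right volume c).quasiMeasurePreserving

variable {E : Type*} [NormedAddCommGroup E]

lemma ii_sub {φ : ℝ → E} (h : IntervalIntegrable φ volume 0 1) {a b : ℝ}
    (ha : 0 ≤ a) (hab : a ≤ b) (hb : b ≤ 1) : IntervalIntegrable φ volume a b :=
  h.mono_set (by rw [Set.uIcc_of_le hab, Set.uIcc_of_le zero_le_one]
                 exact Set.Icc_subset_Icc ha hb)

lemma per_extend {φ : ℝ → E} (hper : Function.Periodic φ 1)
    (h : IntervalIntegrable φ volume 0 1) : IntervalIntegrable φ volume 0 2 := by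
  refine h.trans (b := 1) ?_
  have h2 := h.comp_sub_right 1
  have he : (fun x : ℝ => φ (x - 1)) = φ := funext fun x => by
    simpa using (hper (x - 1)).symm
  rw [he] at h2
  norm_num at h2
  exact h2

lemma half_ii1 {φ : ℝ → E} (h : IntervalIntegrable φ volume 0 1) :
    IntervalIntegrable (fun x => φ (x / 2)) volume 0 1 := by
  have h0 : IntervalIntegrable φ volume 0 (1/2) := ii_sub h le_rfl (by norm_num) (by norm_num)
  have h1 := h0.comp_mul_right (c := (2:ℝ)⁻¹)
  norm_num at h1
  simpa [div_eq_mul_inv] using h1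

lemma half_ii2 {φ : ℝ → E} (h : IntervalIntegrable φ volume 0 1) :
    IntervalIntegrable (fun x => φ ((x + 1) / 2)) volume 0 1 := by
  have h0 : IntervalIntegrable φ volume (1/2) 1 := ii_sub h (by norm_num) (by norm_num) le_rfl
  have h1 := h0.comp_add_right (1/2)
  norm_num at h1
  have h2 := h1.comp_mul_right (c := (2:ℝ)⁻¹)
  norm_num at h2
  have he : (fun x : ℝ => φ ((x + 1) / 2)) = (fun x => φ (x * (1/2) + 1/2)) :=
    funext fun x => congrArg φ (by ring)
  rw [he]
  exact h2

lemma two_ii {φ : ℝ → E} (hper : Function.Periodic φ 1)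
    (h : IntervalIntegrable φ volume 0 1) :
    IntervalIntegrable (fun x => φ (2 * x)) volume 0 1 := by
  have h1 := (per_extend hper h).comp_mul_left (c := 2)
  norm_num at h1
  exact h1

lemma split_integral [NormedSpace ℝ E] {φ : ℝ → E}
    (h : IntervalIntegrable φ volume 0 1) :
    (∫ x in (0:ℝ)..1, (φ (x / 2) + φ ((x + 1) / 2))) = (2:ℝ) • ∫ x in (0:ℝ)..1, φ x := by
  rw [intervalIntegral.integral_add (half_ii1 h) (half_ii2 h)]
  have e1 : (∫ x in (0:ℝ)..1, φ (x / 2)) = (2:ℝ) • ∫ x in (0:ℝ)..(1/2:ℝ), φ x := by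
    have h1 := intervalIntegral.integral_comp_div (a := 0) (b := 1) (c := 2) φ two_ne_zero
    rw [show (0:ℝ)/2 = 0 by norm_num] at h1
    exact h1
  have e2 : (∫ x in (0:ℝ)..1, φ ((x + 1) / 2)) = (2:ℝ) • ∫ x in (1/2:ℝ)..1, φ x := by
    have he : (fun x : ℝ => φ ((x + 1) / 2)) = (fun x => φ (x / 2 + 1/2)) :=
      funext fun x => congrArg φ (by ring)
    rw [he]
    have h1 := intervalIntegral.integral_comp_div_add (a := 0) (b := 1) (c := 2) φ two_ne_zero (1/2)
    rw [show (0:ℝ)/2 + 1/2 = 1/2 by norm_num, show (1:ℝ)/2 + 1/2 = 1 by norm_num] at h1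
    exact h1
  rw [e1, e2, ← smul_add,
    intervalIntegral.integral_add_adjacent_intervals
      (ii_sub h le_rfl (by norm_num) (by norm_num))
      (ii_sub h (by norm_num) (by norm_num) le_rfl)]

open Complex

lemma norm_e (t : ℝ) : ‖Complex.exp (2 * (Real.pi:ℂ) * Complex.I * (t:ℂ))‖ = 1 := by
  rw [show (2 * (Real.pi:ℂ) * Complex.I * (t:ℂ)) = ((2*Real.pi*t : ℝ):ℂ) * Complex.I by
    push_cast; ring]
  exact Complex.norm_exp_ofReal_mul_I _

lemma conj_e_mul_e (t : ℝ) :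
    (starRingEnd ℂ) (Complex.exp (2 * (Real.pi:ℂ) * Complex.I * (t:ℂ))) *
      Complex.exp (2 * (Real.pi:ℂ) * Complex.I * (t:ℂ)) = 1 := by
  rw [mul_comm, Complex.mul_conj, Complex.normSq_eq_norm_sq, norm_e]
  norm_num

lemma exp_shift (t : ℝ) :
    Complex.exp (2 * (Real.pi:ℂ) * Complex.I * ((t + 1/2 : ℝ):ℂ)) =
      - Complex.exp (2 * (Real.pi:ℂ) * Complex.I * (t:ℂ)) := by
  rw [show (2 * (Real.pi:ℂ) * Complex.I * ((t + 1/2 : ℝ):ℂ)) =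
      2 * (Real.pi:ℂ) * Complex.I * (t:ℂ) + (Real.pi:ℂ) * Complex.I by push_cast; ring,
    Complex.exp_add, Complex.exp_pi_mul_I]
  ring

lemma nsq (z : ℂ) : ‖z‖^2 = Complex.normSq z := by
  rw [Complex.sq_norm]

lemma key_identity (P Q u v : ℂ) :
    ‖(starRingEnd ℂ) P * u + (starRingEnd ℂ) Q * v‖^2 + ‖Q * u - P * v‖^2 =
      (‖P‖^2 + ‖Q‖^2) * (‖u‖^2 + ‖v‖^2) := by
  simp only [nsq, Complex.normSq_apply, Complex.mul_re, Complex.mul_im, Complex.add_re,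
    Complex.add_im, Complex.sub_re, Complex.sub_im, Complex.conj_re, Complex.conj_im]
  ring

lemma adj2_apply (m f : ℝ → ℂ) (x : ℝ) :
    adj2 m f x = (2:ℂ)⁻¹ * ((starRingEnd ℂ) (m (x/2)) * f (x/2) +
      (starRingEnd ℂ) (m ((x+1)/2)) * f ((x+1)/2)) := by
  simp [adj2, Finset.sum_range_succ]

lemma part4_pointwise (P Q u v e : ℂ) (he : ‖e‖ = 1) (hx : ‖P‖^2 + ‖Q‖^2 = 2) :
    ‖(2:ℂ)⁻¹ * ((starRingEnd ℂ) P * u + (starRingEnd ℂ) Q * v)‖^2 +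
      ‖(2:ℂ)⁻¹ * ((starRingEnd ℂ) (e * (starRingEnd ℂ) Q) * u +
        (starRingEnd ℂ) (-(e * (starRingEnd ℂ) P)) * v)‖^2
      = 2⁻¹ * (‖u‖^2 + ‖v‖^2) := by
  have h1 : (2:ℂ)⁻¹ * ((starRingEnd ℂ) (e * (starRingEnd ℂ) Q) * u +
      (starRingEnd ℂ) (-(e * (starRingEnd ℂ) P)) * v) =
      (starRingEnd ℂ) e * ((2:ℂ)⁻¹ * (Q * u - P * v)) := by
    simp only [map_mul, map_neg, Complex.conj_conj]
    ring
  rw [h1, norm_mul, norm_mul, norm_mul]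
  have hce : ‖(starRingEnd ℂ) e‖ = 1 := by
    rw [Complex.norm_conj, he]
  have h2 : ‖(2:ℂ)⁻¹‖ = 2⁻¹ := by norm_num
  rw [hce, h2, one_mul]
  have h3 : ‖(starRingEnd ℂ) P * u + (starRingEnd ℂ) Q * v‖^2 + ‖Q*u - P*v‖^2
      = 2 * (‖u‖^2 + ‖v‖^2) := by rw [key_identity, hx]
  linear_combination (4⁻¹ : ℝ) * h3

end Stmt9Aux

set_option maxHeartbeats 1000000 in
/-- for a quadrature mirror filter `m₀` (order `2`), the
operators `(S_jf)(z) = m_j(z)f(z²)`, with `m₁(z) = z·conj(m₀(-z))`, satisfy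
the Cuntz `O₂` relations `S_i*S_j = δ_{ij}I` and `S₀S₀* + S₁S₁* = I`. -/
theorem stmt9 (m₀ : ℝ → ℂ) (hm : Measurable m₀) (hmper : Function.Periodic m₀ 1)
    (hqmf : ∀ᵐ x ∂volume, ‖m₀ x‖ ^ 2 + ‖m₀ (x + 1/2)‖ ^ 2 = 2) :
    ∀ f g : ℝ → ℂ, Measurable f → Function.Periodic f 1 →
      IntegrableOn (fun x => ‖f x‖ ^ 2) (Set.Ioc (0:ℝ) 1) →
      Measurable g → Function.Periodic g 1 →
      IntegrableOn (fun x => ‖g x‖ ^ 2) (Set.Ioc (0:ℝ) 1) →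
      ((∫ x in Set.Ioc (0:ℝ) 1,
            (starRingEnd ℂ) (m₀ x * f (2 * x)) * (m₀ x * g (2 * x)))
          = ∫ x in Set.Ioc (0:ℝ) 1, (starRingEnd ℂ) (f x) * g x) ∧
      ((∫ x in Set.Ioc (0:ℝ) 1,
            (starRingEnd ℂ) (m1of m₀ x * f (2 * x)) * (m1of m₀ x * g (2 * x)))
          = ∫ x in Set.Ioc (0:ℝ) 1, (starRingEnd ℂ) (f x) * g x) ∧
      ((∫ x in Set.Ioc (0:ℝ) 1,
            (starRingEnd ℂ) (m₀ x * f (2 * x)) * (m1of m₀ x * g (2 * x)))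
          = 0) ∧
      ((∫ x in Set.Ioc (0:ℝ) 1, ‖adj2 m₀ f x‖ ^ 2)
          + (∫ x in Set.Ioc (0:ℝ) 1, ‖adj2 (m1of m₀) f x‖ ^ 2)
        = ∫ x in Set.Ioc (0:ℝ) 1, ‖f x‖ ^ 2) := by
  intro f g hf hfper hf2 hg hgper hg2
  -- a.e. bounds on filters
  have hb0 : ∀ᵐ x ∂(volume : Measure ℝ), ‖m₀ x‖ ≤ 2 := by
    filter_upwards [hqmf] with x hx
    nlinarith [norm_nonneg (m₀ x), sq_nonneg (‖m₀ (x + 1/2)‖), norm_nonneg (m₀ (x + 1/2))]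
  have hconjm : Measurable fun z : ℂ => (starRingEnd ℂ) z := by
    simp only [starRingEnd_apply]
    exact continuous_star.measurable
  have hm1 : Measurable (m1of m₀) := by
    unfold m1of
    exact (Complex.measurable_exp.comp
      (measurable_const.mul Complex.measurable_ofReal)).mul
      (hconjm.comp (hm.comp (measurable_add_const (1/2))))
  have hm1per : Function.Periodic (m1of m₀) 1 := by
    intro x
    unfold m1of
    rw [show (2*(Real.pi:ℂ)*Complex.I*((x+1:ℝ):ℂ)) =
        2*(Real.pi:ℂ)*Complex.I*(x:ℂ) + 2*(Real.pi:ℂ)*Complex.I by push_cast; ring,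
      Complex.exp_add, Complex.exp_two_pi_mul_I, show x + 1 + 1/2 = (x + 1/2) + 1 by ring,
      hmper (x + 1/2), mul_one]
  have hb1 : ∀ᵐ x ∂(volume : Measure ℝ), ‖m1of m₀ x‖ ≤ 2 := by
    filter_upwards [(Stmt9Aux.qmp_add (1/2)).ae hb0] with x hx
    unfold m1of
    rw [norm_mul, Stmt9Aux.norm_e, one_mul, Complex.norm_conj]
    exact hx
  -- interval integrability of the squares
  have hφf : IntervalIntegrable (fun x => ‖f x‖^2) volume 0 1 :=
    (intervalIntegrable_iff_integrableOn_Ioc_of_le zero_le_one).mpr hf2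
  have hφg : IntervalIntegrable (fun x => ‖g x‖^2) volume 0 1 :=
    (intervalIntegrable_iff_integrableOn_Ioc_of_le zero_le_one).mpr hg2
  have hφfper : Function.Periodic (fun x => ‖f x‖^2) 1 := fun x => by simp [hfper x]
  have hφgper : Function.Periodic (fun x => ‖g x‖^2) 1 := fun x => by simp [hgper x]
  have II2f : IntervalIntegrable (fun x => ‖f (2*x)‖^2) volume 0 1 :=
    Stmt9Aux.two_ii (φ := fun x => ‖f x‖^2) hφfper hφf
  have II2g : IntervalIntegrable (fun x => ‖g (2*x)‖^2) volume 0 1 :=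
    Stmt9Aux.two_ii (φ := fun x => ‖g x‖^2) hφgper hφg
  -- generic integrability of cross terms
  have Hint : ∀ (m m' : ℝ → ℂ), Measurable m → Measurable m' →
      (∀ᵐ x ∂(volume : Measure ℝ), ‖m x‖ ≤ 2) →
      (∀ᵐ x ∂(volume : Measure ℝ), ‖m' x‖ ≤ 2) →
      IntervalIntegrable
        (fun x => (starRingEnd ℂ) (m x * f (2*x)) * (m' x * g (2*x))) volume 0 1 := by
    intro m m' hmm hmm' hbm hbm'
    rw [intervalIntegrable_iff_integrableOn_Ioc_of_le zero_le_one]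
    have hD : IntegrableOn (fun x => 2 * (‖f (2*x)‖^2 + ‖g (2*x)‖^2)) (Set.Ioc (0:ℝ) 1)
        volume := by
      have h1 := II2f.add II2g
      rw [intervalIntegrable_iff_integrableOn_Ioc_of_le zero_le_one] at h1
      exact h1.const_mul 2
    refine Integrable.mono' hD ?_ ?_
    · have : Measurable (fun x => (starRingEnd ℂ) (m x * f (2*x)) * (m' x * g (2*x))) := by
        fun_prop
      exact this.aestronglyMeasurable
    · refine ae_restrict_of_ae ?_
      filter_upwards [hbm, hbm'] with x h1 h2
      have hn : ‖(starRingEnd ℂ) (m x * f (2*x)) * (m' x * g (2*x))‖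
          = ‖m x‖ * ‖f (2*x)‖ * (‖m' x‖ * ‖g (2*x)‖) := by
        simp [norm_mul, Complex.norm_conj]
      rw [hn]
      have e1 : ‖m x‖ * ‖f (2*x)‖ ≤ 2 * ‖f (2*x)‖ :=
        mul_le_mul_of_nonneg_right h1 (norm_nonneg _)
      have e2 : ‖m' x‖ * ‖g (2*x)‖ ≤ 2 * ‖g (2*x)‖ :=
        mul_le_mul_of_nonneg_right h2 (norm_nonneg _)
      have e3 : ‖m x‖ * ‖f (2*x)‖ * (‖m' x‖ * ‖g (2*x)‖) ≤ (2 * ‖f (2*x)‖) * (2 * ‖g (2*x)‖) :=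
        mul_le_mul e1 e2 (mul_nonneg (norm_nonneg _) (norm_nonneg _))
          (by positivity)
      nlinarith [e3, sq_nonneg (‖f (2*x)‖ - ‖g (2*x)‖)]
  have hIoc : ∀ (F : ℝ → ℂ), (∫ x in Set.Ioc (0:ℝ) 1, F x) = ∫ x in (0:ℝ)..1, F x :=
    fun F => (intervalIntegral.integral_of_le zero_le_one).symm
  have hIocR : ∀ (F : ℝ → ℝ), (∫ x in Set.Ioc (0:ℝ) 1, F x) = ∫ x in (0:ℝ)..1, F x :=
    fun F => (intervalIntegral.integral_of_le zero_le_one).symm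
  have hinj : Function.Injective (fun z : ℂ => (2:ℝ) • z) :=
    smul_right_injective ℂ (two_ne_zero)
  -- the three cross-term identities
  refine ⟨?_, ?_, ?_, ?_⟩
  · -- case 00
    have hH := Hint m₀ m₀ hm hm hb0 hb0
    have key := Stmt9Aux.split_integral hH
    have hae : ∀ᵐ x ∂(volume : Measure ℝ),
        (starRingEnd ℂ) (m₀ (x/2) * f (2*(x/2))) * (m₀ (x/2) * g (2*(x/2)))
        + (starRingEnd ℂ) (m₀ ((x+1)/2) * f (2*((x+1)/2))) * (m₀ ((x+1)/2) * g (2*((x+1)/2)))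
        = 2 * ((starRingEnd ℂ) (f x) * g x) := by
      filter_upwards [Stmt9Aux.qmp_half.ae hqmf] with x hx
      rw [show (2:ℝ)*(x/2) = x by ring, show (2:ℝ)*((x+1)/2) = x + 1 by ring, hfper x,
        hgper x, show (x+1)/2 = x/2 + 1/2 by ring]
      have hPQ : (starRingEnd ℂ) (m₀ (x/2)) * (m₀ (x/2))
          + (starRingEnd ℂ) (m₀ (x/2 + 1/2)) * (m₀ (x/2 + 1/2)) = 2 := by
        rw [mul_comm ((starRingEnd ℂ) (m₀ (x/2))), Complex.mul_conj,
          mul_comm ((starRingEnd ℂ) (m₀ (x/2 + 1/2))), Complex.mul_conj,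
          Complex.normSq_eq_norm_sq, Complex.normSq_eq_norm_sq]
        exact_mod_cast congrArg (Complex.ofReal) hx
      simp only [map_mul]
      linear_combination ((starRingEnd ℂ) (f x) * g x) * hPQ
    have hcongr :
        (∫ x in (0:ℝ)..1,
          ((fun y => (starRingEnd ℂ) (m₀ y * f (2*y)) * (m₀ y * g (2*y))) (x/2)
          + (fun y => (starRingEnd ℂ) (m₀ y * f (2*y)) * (m₀ y * g (2*y))) ((x+1)/2)))
        = ∫ x in (0:ℝ)..1, (2:ℂ) * ((starRingEnd ℂ) (f x) * g x) :=
      intervalIntegral.integral_congr_ae (hae.mono fun x hx _ => hx)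
    rw [hIoc, hIoc]
    apply hinj
    show (2:ℝ) • _ = (2:ℝ) • _
    rw [← key, hcongr, intervalIntegral.integral_const_mul]
    rw [Complex.real_smul]
    norm_num
  · -- case 11
    have hH := Hint (m1of m₀) (m1of m₀) hm1 hm1 hb1 hb1
    have key := Stmt9Aux.split_integral hH
    have hae : ∀ᵐ x ∂(volume : Measure ℝ),
        (starRingEnd ℂ) (m1of m₀ (x/2) * f (2*(x/2))) * (m1of m₀ (x/2) * g (2*(x/2)))
        + (starRingEnd ℂ) (m1of m₀ ((x+1)/2) * f (2*((x+1)/2)))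
            * (m1of m₀ ((x+1)/2) * g (2*((x+1)/2)))
        = 2 * ((starRingEnd ℂ) (f x) * g x) := by
      filter_upwards [Stmt9Aux.qmp_half.ae hqmf] with x hx
      rw [show (2:ℝ)*(x/2) = x by ring, show (2:ℝ)*((x+1)/2) = x + 1 by ring, hfper x,
        hgper x, show (x+1)/2 = x/2 + 1/2 by ring]
      have hm1b : m1of m₀ (x/2 + 1/2) =
          -(Complex.exp (2*(Real.pi:ℂ)*Complex.I*((x/2:ℝ):ℂ)) * (starRingEnd ℂ) (m₀ (x/2))) := by
        show Complex.exp (2*(Real.pi:ℂ)*Complex.I*((x/2 + 1/2 : ℝ):ℂ))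
            * (starRingEnd ℂ) (m₀ (x/2 + 1/2 + 1/2)) = _
        rw [Stmt9Aux.exp_shift (x/2), show x/2 + 1/2 + 1/2 = x/2 + 1 by ring, hmper (x/2)]
        ring
      have hm1a : m1of m₀ (x/2) = Complex.exp (2*(Real.pi:ℂ)*Complex.I*((x/2:ℝ):ℂ))
          * (starRingEnd ℂ) (m₀ (x/2 + 1/2)) := rfl
      have hPQ : (starRingEnd ℂ) (m₀ (x/2)) * (m₀ (x/2))
          + (starRingEnd ℂ) (m₀ (x/2 + 1/2)) * (m₀ (x/2 + 1/2)) = 2 := by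
        rw [mul_comm ((starRingEnd ℂ) (m₀ (x/2))), Complex.mul_conj,
          mul_comm ((starRingEnd ℂ) (m₀ (x/2 + 1/2))), Complex.mul_conj,
          Complex.normSq_eq_norm_sq, Complex.normSq_eq_norm_sq]
        exact_mod_cast congrArg (Complex.ofReal) hx
      have hee := Stmt9Aux.conj_e_mul_e (x/2)
      rw [hm1a, hm1b]
      simp only [map_mul, map_neg, Complex.conj_conj]
      linear_combination ((m₀ (x/2 + 1/2) * (starRingEnd ℂ) (m₀ (x/2 + 1/2))
          + m₀ (x/2) * (starRingEnd ℂ) (m₀ (x/2))) * ((starRingEnd ℂ) (f x) * g x)) * hee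
        + ((starRingEnd ℂ) (f x) * g x) * hPQ
    have hcongr :
        (∫ x in (0:ℝ)..1,
          ((fun y => (starRingEnd ℂ) (m1of m₀ y * f (2*y)) * (m1of m₀ y * g (2*y))) (x/2)
          + (fun y => (starRingEnd ℂ) (m1of m₀ y * f (2*y)) * (m1of m₀ y * g (2*y))) ((x+1)/2)))
        = ∫ x in (0:ℝ)..1, (2:ℂ) * ((starRingEnd ℂ) (f x) * g x) :=
      intervalIntegral.integral_congr_ae (hae.mono fun x hx _ => hx)
    rw [hIoc, hIoc]
    apply hinj
    show (2:ℝ) • _ = (2:ℝ) • _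
    rw [← key, hcongr, intervalIntegral.integral_const_mul]
    rw [Complex.real_smul]
    norm_num
  · -- case 01
    have hH := Hint m₀ (m1of m₀) hm hm1 hb0 hb1
    have key := Stmt9Aux.split_integral hH
    have hae : ∀ᵐ x ∂(volume : Measure ℝ),
        (starRingEnd ℂ) (m₀ (x/2) * f (2*(x/2))) * (m1of m₀ (x/2) * g (2*(x/2)))
        + (starRingEnd ℂ) (m₀ ((x+1)/2) * f (2*((x+1)/2)))
            * (m1of m₀ ((x+1)/2) * g (2*((x+1)/2)))
        = (0:ℂ) := by
      refine Eventually.of_forall fun x => ?_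
      rw [show (2:ℝ)*(x/2) = x by ring, show (2:ℝ)*((x+1)/2) = x + 1 by ring, hfper x,
        hgper x, show (x+1)/2 = x/2 + 1/2 by ring]
      have hm1b : m1of m₀ (x/2 + 1/2) =
          -(Complex.exp (2*(Real.pi:ℂ)*Complex.I*((x/2:ℝ):ℂ)) * (starRingEnd ℂ) (m₀ (x/2))) := by
        show Complex.exp (2*(Real.pi:ℂ)*Complex.I*((x/2 + 1/2 : ℝ):ℂ))
            * (starRingEnd ℂ) (m₀ (x/2 + 1/2 + 1/2)) = _
        rw [Stmt9Aux.exp_shift (x/2), show x/2 + 1/2 + 1/2 = x/2 + 1 by ring, hmper (x/2)]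
        ring
      have hm1a : m1of m₀ (x/2) = Complex.exp (2*(Real.pi:ℂ)*Complex.I*((x/2:ℝ):ℂ))
          * (starRingEnd ℂ) (m₀ (x/2 + 1/2)) := rfl
      rw [hm1a, hm1b]
      simp only [map_mul, map_neg, Complex.conj_conj]
      ring
    have hcongr :
        (∫ x in (0:ℝ)..1,
          ((fun y => (starRingEnd ℂ) (m₀ y * f (2*y)) * (m1of m₀ y * g (2*y))) (x/2)
          + (fun y => (starRingEnd ℂ) (m₀ y * f (2*y)) * (m1of m₀ y * g (2*y))) ((x+1)/2)))
        = ∫ x in (0:ℝ)..1, (0:ℂ) :=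
      intervalIntegral.integral_congr_ae (hae.mono fun x hx _ => hx)
    rw [hIoc]
    have h0 : (2:ℝ) • (∫ x in (0:ℝ)..1,
        (starRingEnd ℂ) (m₀ x * f (2*x)) * (m1of m₀ x * g (2*x))) = 0 := by
      rw [← key, hcongr]
      simp
    exact (smul_eq_zero.mp h0).resolve_left (by norm_num)
  · -- case SS*
    have hbadj : ∀ (m : ℝ → ℂ), (∀ᵐ x ∂(volume : Measure ℝ), ‖m x‖ ≤ 2) →
        ∀ᵐ x ∂(volume : Measure ℝ),
          ‖adj2 m f x‖^2 ≤ 2*(‖f (x/2)‖^2 + ‖f ((x+1)/2)‖^2) := by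
      intro m hbm
      filter_upwards [Stmt9Aux.qmp_half.ae hbm,
        (Stmt9Aux.qmp_half.comp (Stmt9Aux.qmp_add 1)).ae hbm] with x h1 h2'
      have h2 : ‖m ((x + 1) / 2)‖ ≤ 2 := h2'
      rw [Stmt9Aux.adj2_apply]
      have hn : ‖(2:ℂ)⁻¹ * ((starRingEnd ℂ) (m (x/2)) * f (x/2) +
          (starRingEnd ℂ) (m ((x+1)/2)) * f ((x+1)/2))‖
          ≤ ‖f (x/2)‖ + ‖f ((x+1)/2)‖ := by
        rw [norm_mul]
        have c1 : ‖(starRingEnd ℂ) (m (x/2))‖ = ‖m (x/2)‖ := by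
          rw [Complex.norm_conj]
        have c2 : ‖(starRingEnd ℂ) (m ((x+1)/2))‖ = ‖m ((x+1)/2)‖ := by
          rw [Complex.norm_conj]
        have t2 : ‖(starRingEnd ℂ) (m (x/2)) * f (x/2) +
            (starRingEnd ℂ) (m ((x+1)/2)) * f ((x+1)/2)‖
            ≤ 2 * ‖f (x/2)‖ + 2 * ‖f ((x+1)/2)‖ := by
          refine (norm_add_le _ _).trans ?_
          rw [norm_mul, norm_mul, c1, c2]
          have e1 := mul_le_mul_of_nonneg_right h1 (norm_nonneg (f (x/2)))
          have e2 := mul_le_mul_of_nonneg_right h2 (norm_nonneg (f ((x+1)/2)))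
          linarith
        have t3 : ‖(2:ℂ)⁻¹‖ = 2⁻¹ := by norm_num
        rw [t3]
        linarith [norm_nonneg ((starRingEnd ℂ) (m (x/2)) * f (x/2) +
          (starRingEnd ℂ) (m ((x+1)/2)) * f ((x+1)/2))]
      have h5 := pow_le_pow_left₀ (norm_nonneg _) hn 2
      nlinarith [h5, sq_nonneg (‖f (x/2)‖ - ‖f ((x+1)/2)‖)]
    have hadjmeas : ∀ (m : ℝ → ℂ), Measurable m →
        Measurable (fun x => ‖adj2 m f x‖^2) := by
      intro m hmm
      have hA : Measurable (adj2 m f) := by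
        have he : adj2 m f = fun x => (2:ℂ)⁻¹ * ((starRingEnd ℂ) (m (x/2)) * f (x/2)
            + (starRingEnd ℂ) (m ((x+1)/2)) * f ((x+1)/2)) :=
          funext (Stmt9Aux.adj2_apply m f)
        rw [he]
        exact measurable_const.mul
          (((hconjm.comp (hmm.comp (measurable_id.div_const 2))).mul
              (hf.comp (measurable_id.div_const 2))).add
            ((hconjm.comp (hmm.comp ((measurable_id.add_const 1).div_const 2))).mul
              (hf.comp ((measurable_id.add_const 1).div_const 2))))
      exact hA.norm.pow_const 2
    have hDD : IntegrableOn (fun x => 2*(‖f (x/2)‖^2 + ‖f ((x+1)/2)‖^2))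
        (Set.Ioc (0:ℝ) 1) volume := by
      have h1 := ((Stmt9Aux.half_ii1 (φ := fun x => ‖f x‖^2) hφf).add
        (Stmt9Aux.half_ii2 (φ := fun x => ‖f x‖^2) hφf)).const_mul 2
      rw [intervalIntegrable_iff_integrableOn_Ioc_of_le zero_le_one] at h1
      exact h1
    have hAi : ∀ (m : ℝ → ℂ), Measurable m → (∀ᵐ x ∂(volume : Measure ℝ), ‖m x‖ ≤ 2) →
        IntervalIntegrable (fun x => ‖adj2 m f x‖^2) volume 0 1 := by
      intro m hmm hbm
      rw [intervalIntegrable_iff_integrableOn_Ioc_of_le zero_le_one]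
      refine Integrable.mono' hDD ((hadjmeas m hmm).aestronglyMeasurable) ?_
      refine ae_restrict_of_ae ?_
      filter_upwards [hbadj m hbm] with x hx
      rw [Real.norm_eq_abs, abs_of_nonneg (by positivity)]
      exact hx
    have hA := hAi m₀ hm hb0
    have hB := hAi (m1of m₀) hm1 hb1
    have hABae : ∀ᵐ x ∂(volume : Measure ℝ),
        ‖adj2 m₀ f x‖^2 + ‖adj2 (m1of m₀) f x‖^2
        = 2⁻¹ * (‖f (x/2)‖^2 + ‖f ((x+1)/2)‖^2) := by
      filter_upwards [Stmt9Aux.qmp_half.ae hqmf] with x hx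
      rw [Stmt9Aux.adj2_apply, Stmt9Aux.adj2_apply, show (x+1)/2 = x/2 + 1/2 by ring]
      have hm1b : m1of m₀ (x/2 + 1/2) =
          -(Complex.exp (2*(Real.pi:ℂ)*Complex.I*((x/2:ℝ):ℂ)) * (starRingEnd ℂ) (m₀ (x/2))) := by
        show Complex.exp (2*(Real.pi:ℂ)*Complex.I*((x/2 + 1/2 : ℝ):ℂ))
            * (starRingEnd ℂ) (m₀ (x/2 + 1/2 + 1/2)) = _
        rw [Stmt9Aux.exp_shift (x/2), show x/2 + 1/2 + 1/2 = x/2 + 1 by ring, hmper (x/2)]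
        ring
      have hm1a : m1of m₀ (x/2) = Complex.exp (2*(Real.pi:ℂ)*Complex.I*((x/2:ℝ):ℂ))
          * (starRingEnd ℂ) (m₀ (x/2 + 1/2)) := rfl
      rw [hm1a, hm1b]
      exact Stmt9Aux.part4_pointwise (m₀ (x/2)) (m₀ (x/2 + 1/2)) (f (x/2)) (f (x/2 + 1/2))
        (Complex.exp (2*(Real.pi:ℂ)*Complex.I*((x/2:ℝ):ℂ))) (Stmt9Aux.norm_e _) hx
    rw [hIocR, hIocR, hIocR, ← intervalIntegral.integral_add hA hB]
    have hcongr : (∫ x in (0:ℝ)..1, (‖adj2 m₀ f x‖^2 + ‖adj2 (m1of m₀) f x‖^2))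
        = ∫ x in (0:ℝ)..1,
            2⁻¹ * ((fun y => ‖f y‖^2) (x/2) + (fun y => ‖f y‖^2) ((x+1)/2)) :=
      intervalIntegral.integral_congr_ae (hABae.mono fun x hx _ => hx)
    rw [hcongr, intervalIntegral.integral_const_mul, Stmt9Aux.split_integral hφf]
    rw [smul_eq_mul]
    ring
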